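/- For n = 3, the identity [A_{21}⁺, A_{21}⁻] + [A_{22}⁺, A_{22}⁻] = X_{22} − X_{33} holds in End_ℂ(L). -/

import Mathlib

open scoped BigOperators
open MvPolynomial

noncomputable section

/-- The polynomial ring `Λ = ℂ[x_{ki}]` (variables indexed by pairs `(k, i)`). -/
abbrev Lam : Type := MvPolynomial (ℕ × ℕ) ℂ

/-- `L`, the field of fractions of `Λ`. -/
abbrev L : Type := FractionRing Lam

/-- The variable `x_{ki}` as an element of `L`. -/
def x (k i : ℕ) : L := algebraMap Lam L (X (k, i))

/-- The algebra automorphism of `Λ` sending `x_v ↦ x_v - 1` and fixing the other variables. -/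
def shiftEquiv (v : ℕ × ℕ) : Lam ≃ₐ[ℂ] Lam :=
  AlgEquiv.ofAlgHom
    (aeval (fun w => if w = v then X w - 1 else X w))
    (aeval (fun w => if w = v then X w + 1 else X w))
    (by apply MvPolynomial.algHom_ext; intro w; by_cases h : w = v <;> simp [h])
    (by apply MvPolynomial.algHom_ext; intro w; by_cases h : w = v <;> simp [h])

/-- The automorphism `δ^{ki}` of `L`, determined by `δ^{ki}(x_{ℓj}) = x_{ℓj} - δ_{ℓk}δ_{ij}`. -/
def δ (k i : ℕ) : L ≃ₐ[ℂ] L := IsFractionRing.algEquivOfAlgEquiv (shiftEquiv (k, i))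

/-- Multiplication by `a ∈ L` as a `ℂ`-linear endomorphism `m_a` of `L`. -/
def mulOp (a : L) : Module.End ℂ L := LinearMap.mulLeft ℂ a

/-- A field automorphism of `L` as a `ℂ`-linear endomorphism of `L`. -/
def lin (e : L ≃ₐ[ℂ] L) : Module.End ℂ L := e.toLinearMap

/-- The rational function `a_{ki}^+`. -/
def aP (k i : ℕ) : L :=
  -((∏ j ∈ Finset.Icc 1 (k + 1), (x (k + 1) j - x k i)) /
    ∏ j ∈ (Finset.Icc 1 k).erase i, (x k j - x k i))

/-- The rational function `a_{ki}^-`. -/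
def aM (k i : ℕ) : L :=
  (∏ j ∈ Finset.Icc 1 (k - 1), (x (k - 1) j - x k i)) /
    ∏ j ∈ (Finset.Icc 1 k).erase i, (x k j - x k i)

/-- The operator `A_{ki}^+ = δ^{ki} ∘ m_{a_{ki}^+}`. -/
def Ap (k i : ℕ) : Module.End ℂ L := lin (δ k i) * mulOp (aP k i)

/-- The operator `A_{ki}^- = (δ^{ki})^{-1} ∘ m_{a_{ki}^-}`. -/
def Am (k i : ℕ) : Module.End ℂ L := lin (δ k i).symm * mulOp (aM k i)

/-- The operator `X_k^+ = ∑_{i=1}^k A_{ki}^+`. -/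
def Xp (k : ℕ) : Module.End ℂ L := ∑ i ∈ Finset.Icc 1 k, Ap k i

/-- The operator `X_k^- = ∑_{i=1}^k A_{ki}^-`. -/
def Xm (k : ℕ) : Module.End ℂ L := ∑ i ∈ Finset.Icc 1 k, Am k i

/-- The operator `X_{kk}`. -/
def Xd (k : ℕ) : Module.End ℂ L :=
  mulOp ((∑ j ∈ Finset.Icc 1 k, (x k j + (j : L) - 1)) -
    ∑ i ∈ Finset.Icc 1 (k - 1), (x (k - 1) i + (i : L) - 1))

/-- The Vandermonde polynomial `∏_{1 ≤ i < j ≤ k} (x_{ki} - x_{kj})`, as an element of `L`. -/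
def vand (k : ℕ) : L :=
  ∏ p ∈ (Finset.Icc 1 k ×ˢ Finset.Icc 1 k).filter (fun p => p.1 < p.2),
    (x k p.1 - x k p.2)

/-- The operator `𝒱_k = m_{∏_{i<j}(x_{ki} - x_{kj})}`. -/
def Vop (k : ℕ) : Module.End ℂ L := mulOp (vand k)

/-- The generating set of `U_n`: the `X_k^±` for `1 ≤ k ≤ n-1` and the `X_{kk}` for `1 ≤ k ≤ n`. -/
def Ugens (n : ℕ) : Set (Module.End ℂ L) :=
  {u | ∃ k, 1 ≤ k ∧ k + 1 ≤ n ∧ (u = Xp k ∨ u = Xm k)} ∪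
    {u | ∃ k, 1 ≤ k ∧ k ≤ n ∧ u = Xd k}

/-- `U_n`, the Gelfand–Tsetlin realization of `U(gl_n)` inside `End_ℂ(L)`. -/
def Ualg (n : ℕ) : Subalgebra ℂ (Module.End ℂ L) := Algebra.adjoin ℂ (Ugens n)

/-- `𝒜(gl_n)`, the subalgebra generated by `U_n` together with `𝒱_2, …, 𝒱_n`. -/
def Agl (n : ℕ) : Subalgebra ℂ (Module.End ℂ L) :=
  Algebra.adjoin ℂ (Ugens n ∪ {u | ∃ k, 2 ≤ k ∧ k ≤ n ∧ u = Vop k})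

-- helper lemmas
lemma shiftEquiv_X (v w : ℕ × ℕ) :
    shiftEquiv v (X w) = if w = v then X w - 1 else X w := by
  simp [shiftEquiv]

lemma shiftEquiv_symm_X (v w : ℕ × ℕ) :
    (shiftEquiv v).symm (X w) = if w = v then X w + 1 else X w := by
  simp [shiftEquiv, AlgEquiv.ofAlgHom_symm_apply]

lemma δ_x (k i l j : ℕ) :
    δ k i (x l j) = if (l, j) = (k, i) then x l j - 1 else x l j := by
  rw [δ, x, IsFractionRing.algEquivOfAlgEquiv_algebraMap, shiftEquiv_X]
  split <;> simp only [RingHom.map_sub, RingHom.map_one, x]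

lemma δ_symm_x (k i l j : ℕ) :
    (δ k i).symm (x l j) = if (l, j) = (k, i) then x l j + 1 else x l j := by
  rw [δ, x, IsFractionRing.algEquivOfAlgEquiv_symm,
    IsFractionRing.algEquivOfAlgEquiv_algebraMap, shiftEquiv_symm_X]
  split <;> simp only [RingHom.map_add, RingHom.map_one, x]

lemma comm_eq (k i : ℕ) :
    Ap k i * Am k i - Am k i * Ap k i =
      mulOp (δ k i (aP k i) * aM k i - (δ k i).symm (aM k i) * aP k i) := by
  apply LinearMap.ext; intro f
  simp [Ap, Am, lin, mulOp, Module.End.mul_apply, LinearMap.mulLeft_apply, map_mul,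
    sub_mul]
  ring

lemma mulOp_add (a b : L) : mulOp a + mulOp b = mulOp (a + b) := by
  apply LinearMap.ext; intro f; simp [mulOp, add_mul]

lemma mulOp_sub (a b : L) : mulOp a - mulOp b = mulOp (a - b) := by
  apply LinearMap.ext; intro f; simp [mulOp, sub_mul]
lemma scalar_identity {K : Type*} [Field K] (a b c d e f : K)
    (h1 : c - b ≠ 0) (h2 : b - c ≠ 0) (h3 : c - (b - 1) ≠ 0) (h4 : b - (c - 1) ≠ 0)
    (h5 : c - (b + 1) ≠ 0) (h6 : b - (c + 1) ≠ 0) :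
    -((d - (b - 1)) * ((e - (b - 1)) * (f - (b - 1))) / (c - (b - 1))) * ((a - b) / (c - b)) -
        (a - (b + 1)) / (c - (b + 1)) * -((d - b) * ((e - b) * (f - b)) / (c - b)) +
      (-((d - (c - 1)) * ((e - (c - 1)) * (f - (c - 1))) / (b - (c - 1))) * ((a - c) / (b - c)) -
        (a - (c + 1)) / (b - (c + 1)) * -((d - c) * ((e - c) * (f - c)) / (b - c))) =
    b + (c + 2 - 1) - a - (d + (e + 2 - 1 + (f + 3 - 1)) - (b + (c + 2 - 1))) := by
  field_simp
  ring


lemma algebraMap_ne_zero (p : Lam)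
    (h : eval (fun v => if v = (2, 2) then (37 : ℂ) else 0) p ≠ 0) :
    algebraMap Lam L p ≠ 0 := by
  intro hp
  apply h
  have : p = 0 := IsFractionRing.injective Lam L (by rw [hp, RingHom.map_zero])
  simp [this]

set_option maxHeartbeats 2000000 in
set_option synthInstance.maxHeartbeats 200000 in
/-- `[A_{21}⁺, A_{21}⁻] + [A_{22}⁺, A_{22}⁻] = X_{22} − X_{33}`. -/
theorem sum_of_commutators_eq_Xd2_sub_Xd3 :
    (Ap 2 1 * Am 2 1 - Am 2 1 * Ap 2 1) + (Ap 2 2 * Am 2 2 - Am 2 2 * Ap 2 2) =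
      Xd 2 - Xd 3 := by
  rw [comm_eq, comm_eq, mulOp_add, Xd, Xd, mulOp_sub]
  congr 1
  have key : ∀ p : Lam, eval (fun v => if v = (2, 2) then (37 : ℂ) else 0) p ≠ 0 →
      algebraMap Lam L p ≠ 0 := algebraMap_ne_zero
  have h1 : x 2 2 - x 2 1 ≠ 0 := by
    rw [x, x, ← RingHom.map_sub]
    exact key _ (by simp only [RingHom.map_sub, eval_X]; norm_num)
  have h2 : x 2 1 - x 2 2 ≠ 0 := by
    rw [x, x, ← RingHom.map_sub]
    exact key _ (by simp only [RingHom.map_sub, eval_X]; norm_num)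
  have h3 : x 2 2 - (x 2 1 - 1) ≠ 0 := by
    rw [x, x, show (1 : L) = algebraMap Lam L 1 from (RingHom.map_one _).symm,
      ← RingHom.map_sub, ← RingHom.map_sub]
    exact key _ (by simp only [RingHom.map_sub, RingHom.map_one, eval_X]; norm_num)
  have h4 : x 2 1 - (x 2 2 - 1) ≠ 0 := by
    rw [x, x, show (1 : L) = algebraMap Lam L 1 from (RingHom.map_one _).symm,
      ← RingHom.map_sub, ← RingHom.map_sub]
    exact key _ (by simp only [RingHom.map_sub, RingHom.map_one, eval_X]; norm_num)
  have h5 : x 2 2 - (x 2 1 + 1) ≠ 0 := by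
    rw [x, x, show (1 : L) = algebraMap Lam L 1 from (RingHom.map_one _).symm,
      ← RingHom.map_add, ← RingHom.map_sub]
    exact key _ (by simp only [RingHom.map_sub, RingHom.map_add, RingHom.map_one, eval_X]; norm_num)
  have h6 : x 2 1 - (x 2 2 + 1) ≠ 0 := by
    rw [x, x, show (1 : L) = algebraMap Lam L 1 from (RingHom.map_one _).symm,
      ← RingHom.map_add, ← RingHom.map_sub]
    exact key _ (by simp only [RingHom.map_sub, RingHom.map_add, RingHom.map_one, eval_X]; norm_num)
  simp only [aP, aM,
    show Finset.Icc 1 3 = ({1, 2, 3} : Finset ℕ) from rfl,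
    show Finset.Icc 1 2 = ({1, 2} : Finset ℕ) from rfl,
    show Finset.Icc 1 1 = ({1} : Finset ℕ) from rfl,
    show ({1, 2} : Finset ℕ).erase 1 = {2} from rfl,
    show ({1, 2} : Finset ℕ).erase 2 = {1} from rfl]
  rw [Finset.prod_insert (by decide), Finset.prod_insert (by decide)]
  simp only [Finset.prod_singleton, Finset.sum_insert (by decide : (1:ℕ) ∉ ({2,3}:Finset ℕ)),
    Finset.sum_insert (by decide : (2:ℕ) ∉ ({3}:Finset ℕ)),
    Finset.sum_insert (by decide : (1:ℕ) ∉ ({2}:Finset ℕ)), Finset.sum_singleton]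
  simp only [map_div₀, map_neg, map_mul, map_sub, δ_x, δ_symm_x]
  norm_num [δ_x, δ_symm_x, Prod.ext_iff]
  linear_combination scalar_identity (x 1 1) (x 2 1) (x 2 2) (x 3 1) (x 3 2) (x 3 3) h1 h2 h3 h4 h5 h6
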